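/- Let f, g ∈ F be given by admissible linear systems 𝒜_f = (u_f, A_f, v_f) and 𝒜_g = (u_g, A_g, v_g) of dimensions n_f and n_g respectively. If there exist matrices T, U ∈ K^{n_f × n_g} such that u_f U = 0, T A_g − A_f U = A_f u_fᵀ u_g (an identity of matrices over F, where u_fᵀ u_g is the n_f × n_g matrix with a single 1 in position (1,1)), and T v_g = v_f, then f = g. -/

import Mathlib

open Matrix

/-- The row vector `e₁ = (1,0,…,0)`. -/
def e1Row (F : Type*) [Semiring F] (n : ℕ) [NeZero n] : Matrix (Fin 1) (Fin n) F :=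
  Matrix.of fun _ j => if j = 0 then 1 else 0

lemma e1Row_map {K F : Type*} [Semiring K] [Semiring F] (φ : K →+* F) (n : ℕ) [NeZero n] :
    (e1Row K n).map φ = e1Row F n := by
  ext i j
  simp [e1Row, Matrix.map_apply, apply_ite φ]

lemma e1Row_mul_std {F : Type*} [Semiring F] (nf ng : ℕ) [NeZero nf] [NeZero ng] :
    e1Row F nf * Matrix.single (0 : Fin nf) (0 : Fin ng) (1 : F) = e1Row F ng := by
  ext i j
  simp [e1Row, Matrix.mul_apply, Matrix.single, ite_and, eq_comm]

/-- If `f` and `g` are given by admissible linear systems `(e₁, A_f, v_f)` and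
`(e₁, A_g, v_g)` over a division ring `F` which is a `K`-algebra, and there exist
matrices `T, U` over `K` with `e₁ U = 0`, `T A_g - A_f U = A_f e₁ᵀ e₁` and
`T v_g = v_f`, then `f = g`. -/
theorem word_problem_sufficient {K F : Type*} [Field K] [DivisionRing F] [Algebra K F]
    {nf ng : ℕ} [NeZero nf] [NeZero ng]
    (f g : F)
    (Af Bf : Matrix (Fin nf) (Fin nf) F) (vf : Matrix (Fin nf) (Fin 1) K)
    (Ag Bg : Matrix (Fin ng) (Fin ng) F) (vg : Matrix (Fin ng) (Fin 1) K)
    (hAf : Af * Bf = 1) (hAf' : Bf * Af = 1)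
    (hAg : Ag * Bg = 1) (hAg' : Bg * Ag = 1)
    (hf : f = (e1Row F nf * Bf * vf.map (algebraMap K F)) 0 0)
    (hg : g = (e1Row F ng * Bg * vg.map (algebraMap K F)) 0 0)
    (T U : Matrix (Fin nf) (Fin ng) K)
    (h1 : e1Row K nf * U = 0)
    (h2 : T.map (algebraMap K F) * Ag - Af * U.map (algebraMap K F)
        = Af * Matrix.single (0 : Fin nf) (0 : Fin ng) (1 : F))
    (h3 : T * vg = vf) :
    f = g := by
  set φ := algebraMap K F
  have h3' : T.map φ * vg.map φ = vf.map φ := by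
    rw [← Matrix.map_mul, h3]
  have h1' : e1Row F nf * U.map φ = 0 := by
    have := congrArg (Matrix.map · φ) h1
    simpa [Matrix.map_mul, e1Row_map] using this
  have h2' : T.map φ * Ag = Af * (U.map φ + Matrix.single 0 0 1) := by
    rw [Matrix.mul_add, ← h2]; abel
  have key : Bf * T.map φ = (U.map φ + Matrix.single 0 0 1) * Bg :=
    calc Bf * T.map φ = Bf * (T.map φ * Ag * Bg) := by
          rw [Matrix.mul_assoc (T.map φ), hAg, Matrix.mul_one]
      _ = Bf * Af * ((U.map φ + Matrix.single 0 0 1) * Bg) := by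
          rw [h2']; simp only [Matrix.mul_assoc]
      _ = (U.map φ + Matrix.single 0 0 1) * Bg := by
          rw [hAf', Matrix.one_mul]
  rw [hf, hg, ← h3', ← Matrix.mul_assoc, Matrix.mul_assoc (e1Row F nf) Bf, key,
    ← Matrix.mul_assoc, Matrix.mul_add, h1', zero_add, e1Row_mul_std]
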